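/- The circulant graph code over F_9 of length 6 whose generator matrix is the circulant matrix with first row (ω, 0, 1, 1, 1, 0) is a self-dual additive (6, 3^6, 4) MDS code with weight enumerator W(1,y) = 1 + 120 y^4 + 240 y^5 + 368 y^6. -/

import Mathlib

open scoped BigOperators

/-- The Hermitian trace inner product on `F_9^n` (`m = 3`, `p = 3`, `r = 1`, so the trace
    `Tr_{3/3}` is the identity): `u * v = (u · v³ - u³ · v)/(ω - ω³)`. -/
noncomputable def hermForm9 (ω : GaloisField 3 2) {n : ℕ} (u v : Fin n → GaloisField 3 2) :
    GaloisField 3 2 :=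
  (((∑ j, u j * v j ^ 3) - ∑ j, u j ^ 3 * v j) / (ω - ω ^ 3))

namespace Stmt18Aux

noncomputable section

abbrev K := GaloisField 3 2
abbrev φ : ZMod 3 →+* K := algebraMap (ZMod 3) K

def sh (a : Fin 6 → ZMod 3) : Fin 6 → ZMod 3 := fun j => a (j-2) + a (j-3) + a (j-4)
def dcd (ω : K) (x y : Fin 6 → ZMod 3) : Fin 6 → K := fun j => φ (x j) + φ (y j) * ω
def enc (ω : K) (a : Fin 6 → ZMod 3) : Fin 6 → K := dcd ω (sh a) a
def w' (a : Fin 6 → ZMod 3) : ℕ :=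
  (Finset.univ.filter fun j : Fin 6 => a j ≠ 0 ∨ sh a j ≠ 0).card

lemma M0 (ω : K) : ![ω,0,1,1,1,0] 0 = ω := rfl
lemma M1 (ω : K) : ![ω,0,1,1,1,0] 1 = 0 := rfl
lemma M2 (ω : K) : ![ω,0,1,1,1,0] 2 = 1 := rfl
lemma M3 (ω : K) : ![ω,0,1,1,1,0] 3 = 1 := rfl
lemma M4 (ω : K) : ![ω,0,1,1,1,0] 4 = 1 := rfl
lemma M5 (ω : K) : ![ω,0,1,1,1,0] 5 = 0 := rfl

lemma sum_enc (ω : K) (a : Fin 6 → ZMod 3) :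
    ∑ i, a i • (fun j : Fin 6 => ![ω, 0, 1, 1, 1, 0] (j - i)) = enc ω a := by
  funext j
  fin_cases j <;>
    simp [Fin.sum_univ_six, enc, dcd, sh, Algebra.smul_def,
      show ((-1:Fin 6)) = 5 from rfl, show ((-2:Fin 6)) = 4 from rfl,
      show ((-3:Fin 6)) = 3 from rfl, show ((-4:Fin 6)) = 2 from rfl,
      show ((-5:Fin 6)) = 1 from rfl, M0, M1, M2, M3, M4, M5] <;> ring

lemma cube (ω : K) (s t : ZMod 3) : (φ s + φ t * ω)^3 = φ s + φ t * ω^3 := by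
  have h1 : (φ s + φ t * ω)^3 = (φ s)^3 + (φ t * ω)^3 := add_pow_char _ _ 3
  rw [h1, mul_pow, ← map_pow, ← map_pow, ZMod.pow_card, ZMod.pow_card]

section
variable (ω : K)

lemma hphi2 : φ (2 : ZMod 3) = -1 := by
  have h3 : (3:K) = 0 := by exact_mod_cast CharP.cast_eq_zero K 3
  have h2 : (2:ZMod 3) = 1 + 1 := by decide
  rw [h2, map_add, map_one]; linear_combination h3

lemma hnr (hω : ∀ x : K, x ≠ 0 → ∃ k : ℕ, ω ^ k = x) : ∀ r : ZMod 3, ω ≠ φ r := by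
  classical
  letI : Fintype K := Fintype.ofFinite K
  have hS : ω ∉ ({0, 1, -1} : Finset K) := by
    intro hmem
    have hcard : Fintype.card K = 9 := by
      have := GaloisField.card 3 2 (by norm_num)
      rwa [Nat.card_eq_fintype_card] at this
    have hlt : ({0, 1, -1} : Finset K).card < (Finset.univ : Finset K).card := by
      rw [Finset.card_univ, hcard]
      refine lt_of_le_of_lt ?_ (show 3 < 9 by norm_num)
      exact (Finset.card_insert_le _ _).trans (Nat.succ_le_succ (Finset.card_insert_le _ _))
    have hex : ∃ x : K, x ∉ ({0, 1, -1} : Finset K) := by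
      by_contra hall
      push_neg at hall
      exact absurd (Finset.card_le_card fun x _ => hall x) (not_le.2 hlt)
    obtain ⟨x, hx⟩ := hex
    have hx0 : x ≠ 0 := by intro h; exact hx (by simp [h])
    obtain ⟨k, hk⟩ := hω x hx0
    apply hx
    rw [← hk]
    clear hk hx hx0
    induction k with
    | zero => simp
    | succ n ih =>
      rw [pow_succ]
      simp only [Finset.mem_insert, Finset.mem_singleton] at hmem ih ⊢
      rcases ih with h | h | h <;> rcases hmem with h2 | h2 | h2 <;>
        rw [h, h2] <;> norm_num
  intro r h
  apply hS
  simp only [Finset.mem_insert, Finset.mem_singleton]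
  fin_cases r
  · left; rw [h]; exact map_zero φ
  · right; left; rw [h]; exact map_one φ
  · right; right; rw [h]; exact hphi2

variable (hnr' : ∀ r : ZMod 3, ω ≠ φ r)

include hnr' in
lemma comb0 : ∀ s t : ZMod 3, φ s + φ t * ω = 0 → s = 0 ∧ t = 0 := by
  intro s t h
  by_cases ht : t = 0
  · subst ht
    simp at h
    exact ⟨(algebraMap (ZMod 3) K).injective (by simpa using h), rfl⟩
  · exfalso
    apply hnr' (-s * t⁻¹)
    have hφt : φ t ≠ 0 := fun hc => ht ((algebraMap (ZMod 3) K).injective (by simpa using hc))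
    have hmap : φ (-s * t⁻¹) = -φ s * (φ t)⁻¹ := by rw [map_mul, map_neg, map_inv₀]
    rw [hmap]
    field_simp
    linear_combination h

include hnr' in
lemma hne : ω - ω ^ 3 ≠ 0 := by
  intro h
  have hfac : ω * (1 - ω) * (1 + ω) = 0 := by linear_combination h
  rcases mul_eq_zero.1 hfac with h1 | h1
  · rcases mul_eq_zero.1 h1 with h2 | h2
    · exact hnr' 0 (by simpa using h2)
    · exact hnr' 1 (by simp; linear_combination -h2)
  · exact hnr' 2 (by rw [hphi2]; linear_combination h1)

include hnr' in
lemma herm_dec (x y u v : Fin 6 → ZMod 3) :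
    hermForm9 ω (dcd ω x y) (dcd ω u v) = φ (∑ j, (y j * u j - x j * v j)) := by
  unfold hermForm9
  rw [← Finset.sum_sub_distrib]
  have key : ∀ j : Fin 6, dcd ω x y j * dcd ω u v j ^ 3 - dcd ω x y j ^ 3 * dcd ω u v j
      = φ (y j * u j - x j * v j) * (ω - ω ^ 3) := by
    intro j
    simp only [dcd]
    rw [cube, cube, map_sub, map_mul, map_mul]
    ring
  rw [Finset.sum_congr rfl fun j _ => key j, ← Finset.sum_mul, ← map_sum,
    mul_div_assoc, div_self (hne ω hnr'), mul_one]

include hnr' in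
lemma dec_surj : ∀ z : K, ∃ s t : ZMod 3, φ s + φ t * ω = z := by
  classical
  letI : Fintype K := Fintype.ofFinite K
  have hcard : Fintype.card K = 9 := by
    have := GaloisField.card 3 2 (by norm_num)
    rwa [Nat.card_eq_fintype_card] at this
  have hinj : Function.Injective (fun p : ZMod 3 × ZMod 3 => φ p.1 + φ p.2 * ω) := by
    rintro ⟨s, t⟩ ⟨s', t'⟩ h
    simp only at h
    have h0 : φ (s - s') + φ (t - t') * ω = 0 := by
      rw [map_sub, map_sub]; linear_combination h
    obtain ⟨h1, h2⟩ := comb0 ω hnr' _ _ h0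
    have := sub_eq_zero.1 h1
    have := sub_eq_zero.1 h2
    simp_all
  have hbij : Function.Bijective (fun p : ZMod 3 × ZMod 3 => φ p.1 + φ p.2 * ω) := by
    rw [Fintype.bijective_iff_injective_and_card]
    exact ⟨hinj, by simp [hcard]⟩
  intro z
  obtain ⟨⟨s, t⟩, hst⟩ := hbij.2 z
  exact ⟨s, t, hst⟩
end

set_option maxRecDepth 40000 in
lemma mindist : ∀ a : Fin 6 → ZMod 3, a ≠ 0 → 4 ≤ w' a := by decide

end
end Stmt18Aux

open Stmt18Aux in
set_option maxRecDepth 40000 in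
set_option maxHeartbeats 2000000 in
open Classical in
/-- The circulant graph code over `F_9` of length 6 whose generator matrix is the
    circulant matrix with first row `(ω, 0, 1, 1, 1, 0)` (`ω` a primitive element of
    `F_9`, the `i`-th row being the first row cyclically shifted) is a self-dual additive
    `(6, 3^6, 4)` MDS code with weight enumerator
    `W(1,y) = 1 + 120 y⁴ + 240 y⁵ + 368 y⁶`. -/
theorem stmt18 (ω : GaloisField 3 2)
    (hω : ∀ x : GaloisField 3 2, x ≠ 0 → ∃ k : ℕ, ω ^ k = x)
    (C : Submodule (ZMod 3) (Fin 6 → GaloisField 3 2))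
    (hC : C = Submodule.span (ZMod 3)
      (Set.range fun i : Fin 6 => fun j : Fin 6 =>
        ![ω, 0, 1, 1, 1, 0] (j - i))) :
    (∀ u, u ∈ C ↔ ∀ c ∈ C, hermForm9 ω u c = 0) ∧
    Nat.card C = 3 ^ 6 ∧
    (∀ c ∈ C, c ≠ 0 → 4 ≤ (Finset.univ.filter fun j => c j ≠ 0).card) ∧
    Nat.card {c : Fin 6 → GaloisField 3 2 // c ∈ C ∧
        (Finset.univ.filter fun j => c j ≠ 0).card = 4} = 120 ∧
    Nat.card {c : Fin 6 → GaloisField 3 2 // c ∈ C ∧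
        (Finset.univ.filter fun j => c j ≠ 0).card = 5} = 240 ∧
    Nat.card {c : Fin 6 → GaloisField 3 2 // c ∈ C ∧
        (Finset.univ.filter fun j => c j ≠ 0).card = 6} = 368 := by
  have hnr' : ∀ r : ZMod 3, ω ≠ φ r := hnr ω hω
  -- membership characterization
  have memC : ∀ u, u ∈ C ↔ ∃ a : Fin 6 → ZMod 3, enc ω a = u := by
    intro u
    rw [hC, Submodule.mem_span_range_iff_exists_fun]
    constructor
    · rintro ⟨a, ha⟩; exact ⟨a, by rw [← sum_enc ω a]; exact ha⟩
    · rintro ⟨a, ha⟩; exact ⟨a, by rw [sum_enc ω a]; exact ha⟩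
  have hzero : ∀ (s t : ZMod 3), φ s + φ t * ω = 0 ↔ (s = 0 ∧ t = 0) := by
    intro s t
    constructor
    · exact comb0 ω hnr' s t
    · rintro ⟨h1, h2⟩; simp [h1, h2]
  -- weight of enc equals w'
  have hwt : ∀ a : Fin 6 → ZMod 3,
      (Finset.univ.filter fun j => enc ω a j ≠ 0).card = w' a := by
    intro a
    unfold w'
    have hiff : ∀ j ∈ (Finset.univ : Finset (Fin 6)),
        (enc ω a j ≠ 0 ↔ (a j ≠ 0 ∨ sh a j ≠ 0)) := by
      intro j _
      rw [ne_eq, show enc ω a j = φ (sh a j) + φ (a j) * ω from rfl, hzero]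
      tauto
    rw [Finset.filter_congr hiff]
  -- enc injective
  have hencinj : Function.Injective (enc ω) := by
    intro a b h
    funext j
    have hj := congrFun h j
    simp only [enc, dcd] at hj
    have h0 : φ (sh a j - sh b j) + φ (a j - b j) * ω = 0 := by
      rw [map_sub, map_sub]; linear_combination hj
    exact sub_eq_zero.1 (comb0 ω hnr' _ _ h0).2
  -- self-dual forward
  have hforward : ∀ a b : Fin 6 → ZMod 3, hermForm9 ω (enc ω a) (enc ω b) = 0 := by
    intro a b
    rw [show enc ω a = dcd ω (sh a) a from rfl, show enc ω b = dcd ω (sh b) b from rfl,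
      herm_dec ω hnr']
    have hsum : ∑ j, (a j * sh b j - sh a j * b j) = 0 := by
      simp only [sh, Fin.sum_univ_six,
        show ((0:Fin 6) - 2) = 4 from rfl,
        show ((0:Fin 6) - 3) = 3 from rfl,
        show ((0:Fin 6) - 4) = 2 from rfl,
        show ((1:Fin 6) - 2) = 5 from rfl,
        show ((1:Fin 6) - 3) = 4 from rfl,
        show ((1:Fin 6) - 4) = 3 from rfl,
        show ((2:Fin 6) - 2) = 0 from rfl,
        show ((2:Fin 6) - 3) = 5 from rfl,
        show ((2:Fin 6) - 4) = 4 from rfl,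
        show ((3:Fin 6) - 2) = 1 from rfl,
        show ((3:Fin 6) - 3) = 0 from rfl,
        show ((3:Fin 6) - 4) = 5 from rfl,
        show ((4:Fin 6) - 2) = 2 from rfl,
        show ((4:Fin 6) - 3) = 1 from rfl,
        show ((4:Fin 6) - 4) = 0 from rfl,
        show ((5:Fin 6) - 2) = 3 from rfl,
        show ((5:Fin 6) - 3) = 2 from rfl,
        show ((5:Fin 6) - 4) = 1 from rfl]
      ring
    rw [hsum, map_zero]
  -- self-dual backward
  have hback : ∀ u, (∀ c ∈ C, hermForm9 ω u c = 0) → u ∈ C := by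
    intro u hu
    obtain ⟨x, y, hxy⟩ : ∃ x y : Fin 6 → ZMod 3, dcd ω x y = u := by
      choose x y h using fun j => dec_surj ω hnr' (u j)
      exact ⟨x, y, funext h⟩
    have hcc : ∀ i : Fin 6, ∑ j, (y j * sh (fun j' => if j' = i then 1 else 0) j
        - x j * (if j = i then (1:ZMod 3) else 0)) = 0 := by
      intro i
      have hmem : enc ω (fun j' => if j' = i then 1 else 0) ∈ C :=
        (memC _).2 ⟨_, rfl⟩
      have h0 := hu _ hmem
      rw [← hxy, show enc ω (fun j' => if j' = i then 1 else 0)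
          = dcd ω (sh fun j' => if j' = i then 1 else 0) (fun j' => if j' = i then 1 else 0)
          from rfl, herm_dec ω hnr'] at h0
      exact (algebraMap (ZMod 3) K).injective (by simpa using h0)
    have hx0 : x 0 = sh y 0 := by
      have h := hcc 0
      simp only [sh, Fin.sum_univ_six, show ((0:Fin 6) - 2) = 4 from rfl,
        show ((0:Fin 6) - 3) = 3 from rfl,
        show ((0:Fin 6) - 4) = 2 from rfl,
        show ((1:Fin 6) - 2) = 5 from rfl,
        show ((1:Fin 6) - 3) = 4 from rfl,
        show ((1:Fin 6) - 4) = 3 from rfl,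
        show ((2:Fin 6) - 2) = 0 from rfl,
        show ((2:Fin 6) - 3) = 5 from rfl,
        show ((2:Fin 6) - 4) = 4 from rfl,
        show ((3:Fin 6) - 2) = 1 from rfl,
        show ((3:Fin 6) - 3) = 0 from rfl,
        show ((3:Fin 6) - 4) = 5 from rfl,
        show ((4:Fin 6) - 2) = 2 from rfl,
        show ((4:Fin 6) - 3) = 1 from rfl,
        show ((4:Fin 6) - 4) = 0 from rfl,
        show ((5:Fin 6) - 2) = 3 from rfl,
        show ((5:Fin 6) - 3) = 2 from rfl,
        show ((5:Fin 6) - 4) = 1 from rfl] at h ⊢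
      simp at h
      first
      | linear_combination h
      | linear_combination -h
    have hx1 : x 1 = sh y 1 := by
      have h := hcc 1
      simp only [sh, Fin.sum_univ_six, show ((0:Fin 6) - 2) = 4 from rfl,
        show ((0:Fin 6) - 3) = 3 from rfl,
        show ((0:Fin 6) - 4) = 2 from rfl,
        show ((1:Fin 6) - 2) = 5 from rfl,
        show ((1:Fin 6) - 3) = 4 from rfl,
        show ((1:Fin 6) - 4) = 3 from rfl,
        show ((2:Fin 6) - 2) = 0 from rfl,
        show ((2:Fin 6) - 3) = 5 from rfl,
        show ((2:Fin 6) - 4) = 4 from rfl,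
        show ((3:Fin 6) - 2) = 1 from rfl,
        show ((3:Fin 6) - 3) = 0 from rfl,
        show ((3:Fin 6) - 4) = 5 from rfl,
        show ((4:Fin 6) - 2) = 2 from rfl,
        show ((4:Fin 6) - 3) = 1 from rfl,
        show ((4:Fin 6) - 4) = 0 from rfl,
        show ((5:Fin 6) - 2) = 3 from rfl,
        show ((5:Fin 6) - 3) = 2 from rfl,
        show ((5:Fin 6) - 4) = 1 from rfl] at h ⊢
      simp at h
      first
      | linear_combination h
      | linear_combination -h
    have hx2 : x 2 = sh y 2 := by
      have h := hcc 2
      simp only [sh, Fin.sum_univ_six, show ((0:Fin 6) - 2) = 4 from rfl,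
        show ((0:Fin 6) - 3) = 3 from rfl,
        show ((0:Fin 6) - 4) = 2 from rfl,
        show ((1:Fin 6) - 2) = 5 from rfl,
        show ((1:Fin 6) - 3) = 4 from rfl,
        show ((1:Fin 6) - 4) = 3 from rfl,
        show ((2:Fin 6) - 2) = 0 from rfl,
        show ((2:Fin 6) - 3) = 5 from rfl,
        show ((2:Fin 6) - 4) = 4 from rfl,
        show ((3:Fin 6) - 2) = 1 from rfl,
        show ((3:Fin 6) - 3) = 0 from rfl,
        show ((3:Fin 6) - 4) = 5 from rfl,
        show ((4:Fin 6) - 2) = 2 from rfl,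
        show ((4:Fin 6) - 3) = 1 from rfl,
        show ((4:Fin 6) - 4) = 0 from rfl,
        show ((5:Fin 6) - 2) = 3 from rfl,
        show ((5:Fin 6) - 3) = 2 from rfl,
        show ((5:Fin 6) - 4) = 1 from rfl] at h ⊢
      simp at h
      first
      | linear_combination h
      | linear_combination -h
    have hx3 : x 3 = sh y 3 := by
      have h := hcc 3
      simp only [sh, Fin.sum_univ_six, show ((0:Fin 6) - 2) = 4 from rfl,
        show ((0:Fin 6) - 3) = 3 from rfl,
        show ((0:Fin 6) - 4) = 2 from rfl,
        show ((1:Fin 6) - 2) = 5 from rfl,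
        show ((1:Fin 6) - 3) = 4 from rfl,
        show ((1:Fin 6) - 4) = 3 from rfl,
        show ((2:Fin 6) - 2) = 0 from rfl,
        show ((2:Fin 6) - 3) = 5 from rfl,
        show ((2:Fin 6) - 4) = 4 from rfl,
        show ((3:Fin 6) - 2) = 1 from rfl,
        show ((3:Fin 6) - 3) = 0 from rfl,
        show ((3:Fin 6) - 4) = 5 from rfl,
        show ((4:Fin 6) - 2) = 2 from rfl,
        show ((4:Fin 6) - 3) = 1 from rfl,
        show ((4:Fin 6) - 4) = 0 from rfl,
        show ((5:Fin 6) - 2) = 3 from rfl,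
        show ((5:Fin 6) - 3) = 2 from rfl,
        show ((5:Fin 6) - 4) = 1 from rfl] at h ⊢
      simp at h
      first
      | linear_combination h
      | linear_combination -h
    have hx4 : x 4 = sh y 4 := by
      have h := hcc 4
      simp only [sh, Fin.sum_univ_six, show ((0:Fin 6) - 2) = 4 from rfl,
        show ((0:Fin 6) - 3) = 3 from rfl,
        show ((0:Fin 6) - 4) = 2 from rfl,
        show ((1:Fin 6) - 2) = 5 from rfl,
        show ((1:Fin 6) - 3) = 4 from rfl,
        show ((1:Fin 6) - 4) = 3 from rfl,
        show ((2:Fin 6) - 2) = 0 from rfl,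
        show ((2:Fin 6) - 3) = 5 from rfl,
        show ((2:Fin 6) - 4) = 4 from rfl,
        show ((3:Fin 6) - 2) = 1 from rfl,
        show ((3:Fin 6) - 3) = 0 from rfl,
        show ((3:Fin 6) - 4) = 5 from rfl,
        show ((4:Fin 6) - 2) = 2 from rfl,
        show ((4:Fin 6) - 3) = 1 from rfl,
        show ((4:Fin 6) - 4) = 0 from rfl,
        show ((5:Fin 6) - 2) = 3 from rfl,
        show ((5:Fin 6) - 3) = 2 from rfl,
        show ((5:Fin 6) - 4) = 1 from rfl] at h ⊢
      simp at h
      first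
      | linear_combination h
      | linear_combination -h
    have hx5 : x 5 = sh y 5 := by
      have h := hcc 5
      simp only [sh, Fin.sum_univ_six, show ((0:Fin 6) - 2) = 4 from rfl,
        show ((0:Fin 6) - 3) = 3 from rfl,
        show ((0:Fin 6) - 4) = 2 from rfl,
        show ((1:Fin 6) - 2) = 5 from rfl,
        show ((1:Fin 6) - 3) = 4 from rfl,
        show ((1:Fin 6) - 4) = 3 from rfl,
        show ((2:Fin 6) - 2) = 0 from rfl,
        show ((2:Fin 6) - 3) = 5 from rfl,
        show ((2:Fin 6) - 4) = 4 from rfl,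
        show ((3:Fin 6) - 2) = 1 from rfl,
        show ((3:Fin 6) - 3) = 0 from rfl,
        show ((3:Fin 6) - 4) = 5 from rfl,
        show ((4:Fin 6) - 2) = 2 from rfl,
        show ((4:Fin 6) - 3) = 1 from rfl,
        show ((4:Fin 6) - 4) = 0 from rfl,
        show ((5:Fin 6) - 2) = 3 from rfl,
        show ((5:Fin 6) - 3) = 2 from rfl,
        show ((5:Fin 6) - 4) = 1 from rfl] at h ⊢
      simp at h
      first
      | linear_combination h
      | linear_combination -h
    have hxj : ∀ j, x j = sh y j := by
      intro j
      fin_cases j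
      · exact hx0
      · exact hx1
      · exact hx2
      · exact hx3
      · exact hx4
      · exact hx5
    apply (memC u).2
    refine ⟨y, ?_⟩
    rw [← hxy]
    funext j
    rw [show enc ω y j = φ (sh y j) + φ (y j) * ω from rfl,
      show dcd ω x y j = φ (x j) + φ (y j) * ω from rfl, hxj j]
  refine ⟨?_, ?_, ?_, ?_, ?_, ?_⟩
  · -- self-duality
    intro u
    constructor
    · intro hu c hc
      obtain ⟨a, rfl⟩ := (memC u).1 hu
      obtain ⟨b, rfl⟩ := (memC c).1 hc
      exact hforward a b
    · exact hback u
  · -- cardinality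
    have equivC : (Fin 6 → ZMod 3) ≃ C :=
      Equiv.ofBijective (fun a => ⟨enc ω a, (memC _).2 ⟨a, rfl⟩⟩)
        ⟨fun a b h => hencinj (congrArg Subtype.val h), fun u => by
          obtain ⟨a, ha⟩ := (memC u.1).1 u.2; exact ⟨a, Subtype.ext ha⟩⟩
    rw [← Nat.card_congr equivC, Nat.card_eq_fintype_card]
    simp
  · -- minimum distance
    intro c hc hc0
    obtain ⟨a, rfl⟩ := (memC c).1 hc
    have ha : a ≠ 0 := by
      intro h
      apply hc0
      rw [h]
      funext j
      simp [enc, dcd, sh]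
    rw [hwt a]
    exact mindist a ha
  · -- weight 4 count
    rw [Nat.card_congr ((Equiv.ofBijective
      (fun p : {a : Fin 6 → ZMod 3 // w' a = 4} =>
        (⟨enc ω p.1, (memC _).2 ⟨p.1, rfl⟩, by rw [hwt]; exact p.2⟩ :
          {c : Fin 6 → GaloisField 3 2 // c ∈ C ∧
            (Finset.univ.filter fun j => c j ≠ 0).card = 4}))
      ⟨fun a b h => Subtype.ext (hencinj (congrArg Subtype.val h)), fun c => by
        obtain ⟨a, ha⟩ := (memC c.1).1 c.2.1
        exact ⟨⟨a, by rw [← hwt, ha]; exact c.2.2⟩, Subtype.ext ha⟩⟩)).symm,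
      Nat.card_eq_fintype_card, Fintype.card_subtype]
    decide
  · -- weight 5 count
    rw [Nat.card_congr ((Equiv.ofBijective
      (fun p : {a : Fin 6 → ZMod 3 // w' a = 5} =>
        (⟨enc ω p.1, (memC _).2 ⟨p.1, rfl⟩, by rw [hwt]; exact p.2⟩ :
          {c : Fin 6 → GaloisField 3 2 // c ∈ C ∧
            (Finset.univ.filter fun j => c j ≠ 0).card = 5}))
      ⟨fun a b h => Subtype.ext (hencinj (congrArg Subtype.val h)), fun c => by
        obtain ⟨a, ha⟩ := (memC c.1).1 c.2.1
        exact ⟨⟨a, by rw [← hwt, ha]; exact c.2.2⟩, Subtype.ext ha⟩⟩)).symm,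
      Nat.card_eq_fintype_card, Fintype.card_subtype]
    decide
  · -- weight 6 count
    rw [Nat.card_congr ((Equiv.ofBijective
      (fun p : {a : Fin 6 → ZMod 3 // w' a = 6} =>
        (⟨enc ω p.1, (memC _).2 ⟨p.1, rfl⟩, by rw [hwt]; exact p.2⟩ :
          {c : Fin 6 → GaloisField 3 2 // c ∈ C ∧
            (Finset.univ.filter fun j => c j ≠ 0).card = 6}))
      ⟨fun a b h => Subtype.ext (hencinj (congrArg Subtype.val h)), fun c => by
        obtain ⟨a, ha⟩ := (memC c.1).1 c.2.1
        exact ⟨⟨a, by rw [← hwt, ha]; exact c.2.2⟩, Subtype.ext ha⟩⟩)).symm,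
      Nat.card_eq_fintype_card, Fintype.card_subtype]
    decide
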